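/- A finite totally ordered effect algebra with n elements is generated by a single element; i.e., there is an element e such that every nonzero element equals an iterated sum e ⊕ e ⊕ ⋯ ⊕ e. -/

import Mathlib

/-- An effect algebra: a set with `zero`, `one`, a partial commutative associative
sum (modelled as an `Option`-valued operation), unique complements, and
`e ⊕ 1` defined only for `e = 0`. -/
structure EffectAlgebra (E : Type*) where
  zero : E
  one : E
  add : E → E → Option E
  comm : ∀ e f, add e f = add f e
  assoc : ∀ e f g, (add e f).bind (fun s => add s g) = (add f g).bind (fun s => add e s)
  compl : E → E
  add_compl : ∀ e, add e (compl e) = some one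
  compl_unique : ∀ e f, add e f = some one → f = compl e
  one_max : ∀ e f, add e one = some f → e = zero

namespace EffectAlgebra

variable {E : Type*}

/-- Intrinsic order: `e ≤ f` iff `f = e ⊕ g` for some `g`. -/
def le (A : EffectAlgebra E) (e f : E) : Prop := ∃ g, A.add e g = some f

/-- Iterated sum `e ⊕ e ⊕ ⋯ ⊕ e` (`n` copies), when defined. -/
def nsum (A : EffectAlgebra E) (e : E) : ℕ → Option E
  | 0 => some A.zero
  | n + 1 => (nsum A e n).bind (fun s => A.add e s)

end EffectAlgebra

/-- The underlying set `{k/(n-1) : 0 ≤ k ≤ n-1}` of the scale effect algebra `S_n`. -/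
def scaleSet (n : ℕ) : Set ℝ := {x | ∃ k : ℕ, k ≤ n - 1 ∧ x = (k : ℝ) / ((n : ℝ) - 1)}

namespace EA
open EffectAlgebra
variable {E : Type*} (A : EffectAlgebra E)

lemma compl_one : A.compl A.one = A.zero := by
  have h := A.add_compl A.one
  rw [A.comm] at h
  exact A.one_max _ _ h

lemma add_one_zero : A.add A.one A.zero = some A.one := by
  have h := A.add_compl A.one
  rwa [compl_one] at h

lemma compl_compl (e : E) : A.compl (A.compl e) = e := by
  have h := A.add_compl e
  rw [A.comm] at h
  exact (A.compl_unique _ _ h).symm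

lemma add_compl_zero (e : E) : A.add (A.compl e) A.zero = some (A.compl e) := by
  have h := A.assoc e (A.compl e) A.zero
  rw [A.add_compl e] at h
  rw [Option.bind_some] at h
  rw [add_one_zero] at h
  obtain ⟨s, hs, hes⟩ := Option.bind_eq_some_iff.mp h.symm
  rw [hs, A.compl_unique _ _ hes]

lemma add_zero (e : E) : A.add e A.zero = some e := by
  have h := add_compl_zero A (A.compl e)
  rwa [compl_compl] at h

lemma cancel {a b c d : E} (h1 : A.add a b = some d) (h2 : A.add a c = some d) : b = c := by
  set d' := A.compl d with hd'
  have key : ∀ x : E, A.add a x = some d → ∃ u, A.add d' a = some u ∧ x = A.compl u := by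
    intro x hx
    have h := A.assoc a x d'
    rw [hx, Option.bind_some, A.add_compl d] at h
    obtain ⟨t, ht, hat⟩ := Option.bind_eq_some_iff.mp h.symm
    -- ht : add x d' = some t, hat : add a t = some one
    have h2' := A.assoc x d' a
    rw [ht, Option.bind_some] at h2'
    rw [A.comm t a, hat] at h2'
    obtain ⟨u, hu, hxu⟩ := Option.bind_eq_some_iff.mp h2'.symm
    exact ⟨u, hu, A.compl_unique _ _ (by rw [A.comm]; exact hxu)⟩
  obtain ⟨u, hu, hbu⟩ := key b h1
  obtain ⟨v, hv, hcv⟩ := key c h2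
  rw [hbu, hcv, hu.symm.trans hv |> Option.some.inj]

lemma eq_zero_of_add_self {a b : E} (h : A.add a b = some a) : b = A.zero :=
  cancel A h (add_zero A a)

lemma add_eq_zero {a b : E} (h : A.add a b = some A.zero) : a = A.zero := by
  have h1 := A.assoc a b A.one
  rw [h, Option.bind_some, A.comm A.zero A.one, add_one_zero] at h1
  obtain ⟨t, ht, hat⟩ := Option.bind_eq_some_iff.mp h1.symm
  have := A.one_max b t ht
  rw [this, add_zero] at h
  exact Option.some.inj h

lemma le_refl (e : E) : A.le e e := ⟨A.zero, add_zero A e⟩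

lemma le_trans {a b c : E} (h1 : A.le a b) (h2 : A.le b c) : A.le a c := by
  obtain ⟨g, hg⟩ := h1
  obtain ⟨h, hh⟩ := h2
  have := A.assoc a g h
  rw [hg, Option.bind_some, hh] at this
  obtain ⟨s, hs, has⟩ := Option.bind_eq_some_iff.mp this.symm
  exact ⟨s, has⟩

lemma le_antisymm {a b : E} (h1 : A.le a b) (h2 : A.le b a) : a = b := by
  obtain ⟨g, hg⟩ := h1
  obtain ⟨h, hh⟩ := h2
  have := A.assoc a g h
  rw [hg, Option.bind_some, hh] at this
  obtain ⟨s, hs, has⟩ := Option.bind_eq_some_iff.mp this.symm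
  have hs0 : s = A.zero := eq_zero_of_add_self A has
  rw [hs0] at hs
  have hg0 : g = A.zero := add_eq_zero A hs
  rw [hg0, add_zero] at hg
  exact Option.some.inj hg

end EA

theorem totallyOrdered_singly_generated {E : Type*} [Fintype E] (A : EffectAlgebra E)
    (htot : ∀ a b : E, A.le a b ∨ A.le b a) :
    ∃ e : E, ∀ f : E, f ≠ A.zero → ∃ n : ℕ, 1 ≤ n ∧ EffectAlgebra.nsum A e n = some f := by
  classical
  by_cases hz : ∀ f : E, f = A.zero
  · exact ⟨A.zero, fun f hf => absurd (hz f) hf⟩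
  push_neg at hz
  obtain ⟨f0, hf0⟩ := hz
  set m : E → ℕ := fun f => (Finset.univ.filter (fun x => A.le x f)).card with hm
  have hmono : ∀ {g f : E}, A.le g f → g ≠ f → m g < m f := by
    intro g f hle hne
    apply Finset.card_lt_card
    constructor
    · intro x hx
      simp only [Finset.mem_filter, Finset.mem_univ, true_and] at hx ⊢
      exact EA.le_trans A hx hle
    · intro hsub
      have hf : f ∈ Finset.univ.filter (fun x => A.le x f) := by
        simp [EA.le_refl A f]
      have hfg := hsub hf
      simp only [Finset.mem_filter, Finset.mem_univ, true_and] at hfg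
      exact hne (EA.le_antisymm A hle hfg)
  obtain ⟨e, he, hemin⟩ := Finset.exists_min_image
    (Finset.univ.filter (fun x => x ≠ A.zero)) m ⟨f0, by simp [hf0]⟩
  simp only [Finset.mem_filter, Finset.mem_univ, true_and] at he
  have hle : ∀ f : E, f ≠ A.zero → A.le e f := by
    intro f hf
    rcases htot e f with h | h
    · exact h
    · by_cases hef : f = e
      · rw [hef]; exact EA.le_refl A e
      · have h1 := hmono h hef
        have h2 := hemin f (by simp [hf])
        omega
  refine ⟨e, ?_⟩
  suffices H : ∀ N, ∀ f : E, m f ≤ N → f ≠ A.zero →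
      ∃ n, 1 ≤ n ∧ EffectAlgebra.nsum A e n = some f by
    intro f hf; exact H (m f) f le_rfl hf
  intro N
  induction N with
  | zero =>
    intro f hmf hf
    exfalso
    have h1 : f ∈ Finset.univ.filter (fun x => A.le x f) := by simp [EA.le_refl A f]
    have h2 := Finset.card_pos.mpr ⟨f, h1⟩
    simp only [hm] at hmf
    omega
  | succ N ih =>
    intro f hmf hf
    obtain ⟨g, hg⟩ := hle f hf
    have hgf : g ≠ f := by
      intro h
      subst h
      have h1 : A.add g e = some g := by rw [A.comm]; exact hg
      exact he (EA.eq_zero_of_add_self A h1)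
    by_cases hg0 : g = A.zero
    · refine ⟨1, le_rfl, ?_⟩
      simp only [EffectAlgebra.nsum, Option.bind_some]
      rw [← hg0]; exact hg
    · have hgltf : m g < m f := hmono ⟨e, by rw [A.comm]; exact hg⟩ hgf
      obtain ⟨n, hn1, hns⟩ := ih g (by omega) hg0
      exact ⟨n + 1, by omega, by simp [EffectAlgebra.nsum, hns, hg]⟩
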